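/- For an object M of Prefrag FR the following are equivalent: (1) M lies in the essential image of φ : Glid FR → Prefrag FR (M is a glider representation); (2) the counit of the adjunction ψ ⊣ φ at M, φ(ψ(M)) → M, is an isomorphism; (3) the counit of the adjunction j_L ⊣ j^* at M, j^*(j_L(M)) → M, is an isomorphism; (4) the object j_!(η(M)) of Mod oFF_Λ R lies in Preglid FR. -/

import Mathlib

set_option linter.unusedSectionVars false
set_option maxHeartbeats 1000000
set_option synthInstance.maxHeartbeats 1000000
set_option maxHeartbeats 2000000

noncomputable section

open CategoryTheory CategoryTheory.Limits

universe u

namespace GliderPaper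

/-- A `Γ`-filtration `FR` on a unital ring `R`: additive subgroups `F γ` with
`1 ∈ F 1`, monotone in `γ`, and multiplicative. -/
structure RingFiltration (Γ : Type u) [Group Γ] [PartialOrder Γ] (R : Type u) [Ring R] where
  F : Γ → AddSubgroup R
  one_mem : (1 : R) ∈ F 1
  mono : ∀ {α β : Γ}, α ≤ β → F α ≤ F β
  mul_mem : ∀ {α β : Γ} {a b : R}, a ∈ F α → b ∈ F β → a * b ∈ F (α * β)

variable {Γ : Type u} [Group Γ] [PartialOrder Γ]
  [CovariantClass Γ Γ (· * ·) (· ≤ ·)] [CovariantClass Γ Γ (Function.swap (· * ·)) (· ≤ ·)]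
  {R : Type u} [Ring R]

/-- Objects of the extended filtered companion category `oFF_Λ R`:
the disjoint union `Λ ⊔ {∞}`. -/
inductive OFF (FR : RingFiltration Γ R) (Λ : Set Γ) : Type u
  | of (α : Λ)
  | infty

/-- Objects of the filtered companion category `FF_Λ R`: the set `Λ`. -/
inductive FF (FR : RingFiltration Γ R) (Λ : Set Γ) : Type u
  | of (α : Λ)

variable (FR : RingFiltration Γ R) (Λ : Set Γ)

namespace OFF

/-- `le X Y` holds iff the canonical morphism `1_{X,Y}` is defined, i.e. `X ≤ Y` in `Λ`,
or `Y = ∞`. -/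
def le : OFF FR Λ → OFF FR Λ → Prop
  | of α, of β => (α : Γ) ≤ (β : Γ)
  | _, infty => True
  | infty, of _ => False

open scoped Classical in
/-- The additive subgroup of `R` of morphisms `X ⟶ Y` in `oFF_Λ R`:
`Hom(α,β) = F_{βα⁻¹}R` for `α ≤ β` in `Λ`, `Hom(X,∞) = R`, and `0` otherwise. -/
noncomputable def homGrp : OFF FR Λ → OFF FR Λ → AddSubgroup R
  | of α, of β => if (α : Γ) ≤ (β : Γ) then FR.F ((β : Γ) * (α : Γ)⁻¹) else ⊥
  | _, infty => ⊤
  | infty, of _ => ⊥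

theorem le_refl' : ∀ X : OFF FR Λ, le FR Λ X X
  | of _ => _root_.le_refl _
  | infty => trivial

theorem one_mem_homGrp : ∀ {X Y : OFF FR Λ}, le FR Λ X Y → (1 : R) ∈ homGrp FR Λ X Y
  | of α, of β, h => by
      have h' : (α : Γ) ≤ (β : Γ) := h
      have h1 : (1 : Γ) ≤ (β : Γ) * (α : Γ)⁻¹ := by
        rw [← mul_inv_cancel (α : Γ)]
        exact mul_le_mul_left h' _
      simpa [homGrp, if_pos h'] using FR.mono h1 FR.one_mem
  | of _, infty, _ => trivial
  | infty, infty, _ => trivial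
  | infty, of _, h => h.elim

theorem mul_mem_homGrp : ∀ {X Y Z : OFF FR Λ} {f g : R},
    f ∈ homGrp FR Λ X Y → g ∈ homGrp FR Λ Y Z → g * f ∈ homGrp FR Λ X Z := by
  intro X Y Z f g hf hg
  cases X <;> cases Y <;> cases Z <;> simp only [homGrp] at hf hg ⊢ <;> try trivial
  case of.of.of a b c =>
    by_cases hab : (a : Γ) ≤ (b : Γ)
    · by_cases hbc : (b : Γ) ≤ (c : Γ)
      · rw [if_pos hab] at hf
        rw [if_pos hbc] at hg
        rw [if_pos (le_trans hab hbc)]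
        have := FR.mul_mem hg hf
        rwa [show (c : Γ) * (b : Γ)⁻¹ * ((b : Γ) * (a : Γ)⁻¹) = (c : Γ) * (a : Γ)⁻¹ by
          group] at this
      · rw [if_neg hbc] at hg
        rw [AddSubgroup.mem_bot] at hg
        subst hg
        simp only [zero_mul]
        exact AddSubgroup.zero_mem _
    · rw [if_neg hab] at hf
      rw [AddSubgroup.mem_bot] at hf
      subst hf
      simp only [mul_zero]
      exact AddSubgroup.zero_mem _
  case of.infty.of a c =>
    rw [AddSubgroup.mem_bot] at hg
    subst hg
    simp only [zero_mul]
    exact AddSubgroup.zero_mem _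
  case infty.of.of b c =>
    rw [AddSubgroup.mem_bot] at hf
    subst hf
    simp only [mul_zero]
    exact AddSubgroup.zero_mem _
  case infty.infty.of c =>
    rw [AddSubgroup.mem_bot] at hg
    subst hg
    simp only [zero_mul]
    exact AddSubgroup.zero_mem _

instance : Category (OFF FR Λ) where
  Hom X Y := homGrp FR Λ X Y
  id X := ⟨1, one_mem_homGrp FR Λ (le_refl' FR Λ X)⟩
  comp f g := ⟨g.1 * f.1, mul_mem_homGrp FR Λ f.2 g.2⟩
  id_comp f := Subtype.ext (mul_one f.1)
  comp_id f := Subtype.ext (one_mul f.1)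
  assoc f g h := Subtype.ext (mul_assoc h.1 g.1 f.1).symm

instance : Preadditive (OFF FR Λ) where
  homGroup X Y := inferInstanceAs (AddCommGroup (homGrp FR Λ X Y))
  add_comp _ _ _ f f' g := Subtype.ext (mul_add g.1 f.1 f'.1)
  comp_add _ _ _ f g g' := Subtype.ext (add_mul g.1 g'.1 f.1)

end OFF

namespace FF

/-- The inclusion of the objects of `FF_Λ R` into those of `oFF_Λ R`. -/
def toOFF : FF FR Λ → OFF FR Λ
  | of α => .of α

instance : Category (FF FR Λ) where
  Hom X Y := OFF.homGrp FR Λ (toOFF FR Λ X) (toOFF FR Λ Y)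
  id X := ⟨1, OFF.one_mem_homGrp FR Λ (OFF.le_refl' FR Λ _)⟩
  comp f g := ⟨g.1 * f.1, OFF.mul_mem_homGrp FR Λ f.2 g.2⟩
  id_comp f := Subtype.ext (mul_one f.1)
  comp_id f := Subtype.ext (one_mul f.1)
  assoc f g h := Subtype.ext (mul_assoc h.1 g.1 f.1).symm

instance : Preadditive (FF FR Λ) where
  homGroup X Y := inferInstanceAs (AddCommGroup (OFF.homGrp FR Λ (toOFF FR Λ X) (toOFF FR Λ Y)))
  add_comp _ _ _ f f' g := Subtype.ext (mul_add g.1 f.1 f'.1)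
  comp_add _ _ _ f g g' := Subtype.ext (add_mul g.1 g'.1 f.1)

end FF

/-- The inclusion functor `j : FF_Λ R ⥤ oFF_Λ R`. -/
def jF : FF FR Λ ⥤ OFF FR Λ where
  obj := FF.toOFF FR Λ
  map f := f
  map_id _ := rfl
  map_comp _ _ := rfl

instance : (jF FR Λ).Additive := ⟨rfl⟩

/-- `Mod C`: the category of additive functors from `C` to abelian groups. -/
abbrev Mod (C : Type u) [Category.{u} C] [Preadditive C] : Type (u + 1) :=
  C ⥤+ AddCommGrpCat.{u}

/-- The component at `X` of a morphism in `Mod C`. -/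
def mapp {C : Type u} [Category.{u} C] [Preadditive C] {M N : Mod C} (f : M ⟶ N) (X : C) :
    M.obj.obj X ⟶ N.obj.obj X :=
  (show M.obj ⟶ N.obj from f.hom).app X

/-- The canonical morphism `1_{X,Y}` in `oFF_Λ R`, given by `1_R`. -/
def unitHom (X Y : OFF FR Λ) (h : OFF.le FR Λ X Y) : X ⟶ Y :=
  ⟨1, OFF.one_mem_homGrp FR Λ h⟩

/-- The canonical morphism `1_{α,β}` in `FF_Λ R`, given by `1_R`. -/
def unitHomFF (α β : Λ) (h : (α : Γ) ≤ (β : Γ)) : (FF.of α : FF FR Λ) ⟶ FF.of β :=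
  unitHom FR Λ (.of α) (.of β) h

/-- A module `M` over `oFF_Λ R` is a preglider if all the maps `M(1_{X,Y})` are injective. -/
def IsPreglider (M : Mod (OFF FR Λ)) : Prop :=
  ∀ (X Y : OFF FR Λ) (h : OFF.le FR Λ X Y), Function.Injective (M.obj.map (unitHom FR Λ X Y h))

/-- A module `M` over `FF_Λ R` is a prefragment if all the maps `M(1_{α,β})` are injective. -/
def IsPrefragment (M : Mod (FF FR Λ)) : Prop :=
  ∀ (α β : Λ) (h : (α : Γ) ≤ (β : Γ)), Function.Injective (M.obj.map (unitHomFF FR Λ α β h))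

/-- The category of pregliders: the full subcategory of `Mod (oFF_Λ R)` of pregliders. -/
abbrev Preglid : Type (u + 1) :=
  ObjectProperty.FullSubcategory (fun M : Mod (OFF FR Λ) => IsPreglider FR Λ M)

instance : Preadditive (Preglid FR Λ) := Preadditive.inducedCategory _

/-- The category of prefragments: the full subcategory of `Mod (FF_Λ R)` of prefragments. -/
abbrev Prefrag : Type (u + 1) :=
  ObjectProperty.FullSubcategory (fun M : Mod (FF FR Λ) => IsPrefragment FR Λ M)

instance : Preadditive (Prefrag FR Λ) := Preadditive.inducedCategory _

/-- The inclusion `Preglid FR Λ ⥤ Mod (oFF_Λ R)`. -/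
def iotaF : Preglid FR Λ ⥤ Mod (OFF FR Λ) := ObjectProperty.ι _

/-- The inclusion `Prefrag FR Λ ⥤ Mod (FF_Λ R)`. -/
def etaF : Prefrag FR Λ ⥤ Mod (FF FR Λ) := ObjectProperty.ι _

/-- The component at `X` of a morphism of pregliders. -/
def pgapp {M N : Preglid FR Λ} (f : M ⟶ N) (X : OFF FR Λ) :
    M.obj.obj.obj X ⟶ N.obj.obj.obj X :=
  mapp (show M.obj ⟶ N.obj from f.hom) X

/-- The component at `X` of a morphism of prefragments. -/
def pfapp {M N : Prefrag FR Λ} (f : M ⟶ N) (X : FF FR Λ) :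
    M.obj.obj.obj X ⟶ N.obj.obj.obj X :=
  mapp (show M.obj ⟶ N.obj from f.hom) X

/-- The class `Σ` of morphisms of pregliders all of whose components at objects of `Λ`
are isomorphisms. -/
def SigmaClass : MorphismProperty (Preglid FR Λ) :=
  fun _ _ f => ∀ α : Λ, IsIso (pgapp FR Λ f (.of α))

/-- The category of glider representations: the localization of `Preglid FR Λ` at `Σ`. -/
abbrev Glid : Type (u + 1) := (SigmaClass FR Λ).Localization

/-- The localization functor `Q : Preglid FR Λ ⥤ Glid FR Λ`. -/
def QF : Preglid FR Λ ⥤ Glid FR Λ := (SigmaClass FR Λ).Q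

/-- The restriction functor `j^* : Mod (oFF_Λ R) ⥤ Mod (FF_Λ R)`. -/
def jStar : Mod (OFF FR Λ) ⥤ Mod (FF FR Λ) where
  obj M := ⟨jF FR Λ ⋙ M.obj, by haveI := M.property; exact (inferInstance : (jF FR Λ ⋙ M.obj).Additive)⟩
  map {M N} f := ⟨Functor.whiskerLeft (jF FR Λ) (show M.obj ⟶ N.obj from f.hom)⟩
  map_id _ := rfl
  map_comp _ _ := rfl

theorem isPrefragment_jStar (M : Mod (OFF FR Λ)) (hM : IsPreglider FR Λ M) :
    IsPrefragment FR Λ ((jStar FR Λ).obj M) :=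
  fun α β h => hM (.of α) (.of β) h

/-- The restriction functor `j^* : Preglid FR Λ ⥤ Prefrag FR Λ`. -/
def jRes : Preglid FR Λ ⥤ Prefrag FR Λ where
  obj M := ⟨(jStar FR Λ).obj M.obj, isPrefragment_jStar FR Λ M.obj M.property⟩
  map f := ⟨(jStar FR Λ).map f.hom⟩
  map_id M := InducedCategory.hom_ext ((jStar FR Λ).map_id M.obj)
  map_comp f g := InducedCategory.hom_ext ((jStar FR Λ).map_comp f.hom g.hom)

theorem sigma_isInvertedBy : (SigmaClass FR Λ).IsInvertedBy (jRes FR Λ) := by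
  intro M N f hf
  haveI : (AdditiveFunctor.forget (FF FR Λ) AddCommGrpCat.{u}).Faithful :=
    ObjectProperty.faithful_ι _
  haveI : ∀ X : FF FR Λ, IsIso
      (((ObjectProperty.ι (fun M : Mod (FF FR Λ) => IsPrefragment FR Λ M) ⋙
        AdditiveFunctor.forget _ _).map ((jRes FR Λ).map f)).app X) := by
    rintro ⟨α⟩
    first
    | exact hf α
    | exact @id (IsIso (f.hom.hom.app (OFF.of α))) (hf α)
    | (convert hf α using 1)
  haveI : IsIso ((ObjectProperty.ι (fun M : Mod (FF FR Λ) => IsPrefragment FR Λ M) ⋙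
      AdditiveFunctor.forget _ _).map ((jRes FR Λ).map f)) :=
    NatIso.isIso_of_isIso_app _
  exact isIso_of_reflects_iso ((jRes FR Λ).map f)
    (ObjectProperty.ι (fun M : Mod (FF FR Λ) => IsPrefragment FR Λ M) ⋙
      AdditiveFunctor.forget _ _)

/-- The canonical fully faithful functor `φ : Glid FR Λ ⥤ Prefrag FR Λ`,
the unique functor with `Q ⋙ φ = j^*`. -/
def phiF : Glid FR Λ ⥤ Prefrag FR Λ :=
  Localization.Construction.lift (jRes FR Λ) (sigma_isInvertedBy FR Λ)

theorem phiF_fac : QF FR Λ ⋙ phiF FR Λ = jRes FR Λ :=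
  Localization.Construction.fac _ _



section Auxiliary

variable {Γ : Type u} [Group Γ] [PartialOrder Γ]
  [CovariantClass Γ Γ (· * ·) (· ≤ ·)] [CovariantClass Γ Γ (Function.swap (· * ·)) (· ≤ ·)]
  {R : Type u} [Ring R] (FR : RingFiltration Γ R) (Λ : Set Γ)

/-- Underlying natural transformation of a morphism in `Mod (FF FR Λ)`. -/
def toNatFF {M N : Mod (FF FR Λ)} (f : M ⟶ N) : M.obj ⟶ N.obj := f.hom

/-- Underlying natural transformation of a morphism in `Mod (OFF FR Λ)`. -/
def toNatOFF {M N : Mod (OFF FR Λ)} (f : M ⟶ N) : M.obj ⟶ N.obj := f.hom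

lemma isIso_modFF_of_components {M N : Mod (FF FR Λ)} (f : M ⟶ N)
    (h : ∀ X, IsIso ((toNatFF FR Λ f).app X)) : IsIso f := by
  haveI : (AdditiveFunctor.forget (FF FR Λ) AddCommGrpCat.{u}).Faithful :=
    ObjectProperty.faithful_ι _
  haveI : ∀ X, IsIso (((AdditiveFunctor.forget (FF FR Λ) AddCommGrpCat.{u}).map f).app X) := h
  haveI : IsIso ((AdditiveFunctor.forget (FF FR Λ) AddCommGrpCat.{u}).map f) :=
    NatIso.isIso_of_isIso_app _
  exact isIso_of_reflects_iso f (AdditiveFunctor.forget _ _)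

lemma isIso_modOFF_of_components {M N : Mod (OFF FR Λ)} (f : M ⟶ N)
    (h : ∀ X, IsIso ((toNatOFF FR Λ f).app X)) : IsIso f := by
  haveI : (AdditiveFunctor.forget (OFF FR Λ) AddCommGrpCat.{u}).Faithful :=
    ObjectProperty.faithful_ι _
  haveI : ∀ X, IsIso (((AdditiveFunctor.forget (OFF FR Λ) AddCommGrpCat.{u}).map f).app X) := h
  haveI : IsIso ((AdditiveFunctor.forget (OFF FR Λ) AddCommGrpCat.{u}).map f) :=
    NatIso.isIso_of_isIso_app _
  exact isIso_of_reflects_iso f (AdditiveFunctor.forget _ _)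

lemma app_isIso_of_isIso_modFF {M N : Mod (FF FR Λ)} (f : M ⟶ N) [IsIso f] (X : FF FR Λ) :
    IsIso ((toNatFF FR Λ f).app X) := by
  haveI : IsIso ((AdditiveFunctor.forget (FF FR Λ) AddCommGrpCat.{u}).map f) :=
    inferInstance
  exact inferInstanceAs
    (IsIso (((AdditiveFunctor.forget (FF FR Λ) AddCommGrpCat.{u}).map f).app X))

lemma app_isIso_of_isIso_modOFF {M N : Mod (OFF FR Λ)} (f : M ⟶ N) [IsIso f] (X : OFF FR Λ) :
    IsIso ((toNatOFF FR Λ f).app X) := by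
  haveI : IsIso ((AdditiveFunctor.forget (OFF FR Λ) AddCommGrpCat.{u}).map f) :=
    inferInstance
  exact inferInstanceAs
    (IsIso (((AdditiveFunctor.forget (OFF FR Λ) AddCommGrpCat.{u}).map f).app X))

lemma isIso_prefrag_iff {M N : Prefrag FR Λ} (f : M ⟶ N) :
    IsIso f ↔ IsIso ((etaF FR Λ).map f) := by
  constructor
  · intro h
    exact inferInstanceAs (IsIso ((etaF FR Λ).map f))
  · intro h
    haveI : (etaF FR Λ).Full :=
      inferInstanceAs ((ObjectProperty.ι
        (fun M : Mod (FF FR Λ) => IsPrefragment FR Λ M)).Full)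
    haveI : (etaF FR Λ).Faithful :=
      inferInstanceAs ((ObjectProperty.ι
        (fun M : Mod (FF FR Λ) => IsPrefragment FR Λ M)).Faithful)
    haveI : IsIso ((etaF FR Λ).map f) := h
    exact isIso_of_reflects_iso f (etaF FR Λ)

lemma injective_of_isIso_addCommGrp {A B : AddCommGrpCat.{u}} (g : A ⟶ B) [IsIso g] :
    Function.Injective g :=
  (ConcreteCategory.bijective_of_isIso g).1

lemma le_infty' : ∀ Y : OFF FR Λ, OFF.le FR Λ Y .infty
  | .of _ => trivial
  | .infty => trivial

lemma unitHom_comp_infty {α β : Λ} (h : (α : Γ) ≤ (β : Γ)) :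
    unitHom FR Λ (.of α) (.of β) h ≫ unitHom FR Λ (.of β) .infty (le_infty' FR Λ _) =
      unitHom FR Λ (.of α) .infty (le_infty' FR Λ _) :=
  Subtype.ext (one_mul 1)

lemma isPreglider_of_infty (X : Mod (OFF FR Λ))
    (h : ∀ Y : OFF FR Λ, Function.Injective (X.obj.map (unitHom FR Λ Y .infty (le_infty' FR Λ _)))) :
    IsPreglider FR Λ X := by
  intro Y Z hle
  cases Z with
  | infty => exact h Y
  | of β =>
    cases Y with
    | infty => exact hle.elim
    | of α =>
      intro a b hab
      apply h (.of α)
      rw [← unitHom_comp_infty FR Λ hle, X.obj.map_comp, comp_apply, comp_apply, hab]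

lemma isPreglider_of_iso {X X' : Mod (OFF FR Λ)} (e : X ≅ X') (h : IsPreglider FR Λ X) :
    IsPreglider FR Λ X' := by
  apply isPreglider_of_infty
  intro Y a b hab
  haveI h1 : IsIso ((toNatOFF FR Λ e.inv).app Y) :=
    app_isIso_of_isIso_modOFF FR Λ e.inv Y
  apply injective_of_isIso_addCommGrp ((toNatOFF FR Λ e.inv).app Y)
  apply h Y .infty (le_infty' FR Λ _)
  have hnat := (toNatOFF FR Λ e.inv).naturality (unitHom FR Λ Y .infty (le_infty' FR Λ _))
  have h2 : ∀ c, X.obj.map (unitHom FR Λ Y .infty (le_infty' FR Λ _))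
      ((toNatOFF FR Λ e.inv).app Y c) =
      (toNatOFF FR Λ e.inv).app .infty
        (X'.obj.map (unitHom FR Λ Y .infty (le_infty' FR Λ _)) c) := by
    intro c
    exact (congrArg (fun g => g c) hnat).symm
  rw [h2 a, h2 b, hab]

lemma punit_hom_ext {A : AddCommGrpCat.{u}} (f g : A ⟶ AddCommGrpCat.of PUnit.{u + 1}) : f = g :=
  ConcreteCategory.hom_ext _ _ fun _ => Subsingleton.elim _ _

lemma modFF_hom_ext {M N : Mod (FF FR Λ)} (f g : M ⟶ N)
    (h : ∀ X, (toNatFF FR Λ f).app X = (toNatFF FR Λ g).app X) : f = g :=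
  InducedCategory.hom_ext (NatTrans.ext (funext h))

lemma modOFF_hom_ext {M N : Mod (OFF FR Λ)} (f g : M ⟶ N)
    (h : ∀ X, (toNatOFF FR Λ f).app X = (toNatOFF FR Λ g).app X) : f = g :=
  InducedCategory.hom_ext (NatTrans.ext (funext h))

lemma hom_infty_of_eq_zero {β : Λ} (f : (OFF.infty : OFF FR Λ) ⟶ .of β) : f = 0 :=
  Subtype.ext (AddSubgroup.mem_bot.mp f.2)

/-- The underlying functor of the extension-by-zero of a module over `FF` to `OFF`. -/
def zext (M : Mod (FF FR Λ)) : OFF FR Λ ⥤ AddCommGrpCat.{u} where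
  obj X := match X with
    | .of α => M.obj.obj (.of α)
    | .infty => AddCommGrpCat.of PUnit.{u + 1}
  map {X Y} f := match X, Y, f with
    | .of _, .of _, f => M.obj.map f
    | .of _, .infty, _ => 0
    | .infty, .infty, _ => 0
    | .infty, .of _, _ => 0
  map_id X := by
    cases X with
    | of α => exact M.obj.map_id (.of α)
    | infty => exact punit_hom_ext _ _
  map_comp {X Y Z} f g := by
    haveI := M.property
    cases X <;> cases Y <;> cases Z
    · exact M.obj.map_comp f g
    · exact punit_hom_ext _ _
    · rw [hom_infty_of_eq_zero FR Λ g, comp_zero]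
      show M.obj.map 0 = _
      rw [M.obj.map_zero]
      exact (comp_zero).symm
    · exact punit_hom_ext _ _
    · show (0 : _ ⟶ _) = _
      exact (zero_comp).symm
    · exact punit_hom_ext _ _
    · show (0 : _ ⟶ _) = _
      exact (zero_comp).symm
    · exact punit_hom_ext _ _

lemma zext_additive (M : Mod (FF FR Λ)) : (zext FR Λ M).Additive := by
  haveI := M.property
  constructor
  intro X Y f g
  cases X <;> cases Y
  · exact M.obj.map_add
  · exact punit_hom_ext _ _
  · show (0 : _ ⟶ _) = 0 + 0
    exact (add_zero _).symm
  · exact punit_hom_ext _ _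

/-- Extension by zero, right adjoint to the restriction `jStar`. -/
def R0 : Mod (FF FR Λ) ⥤ Mod (OFF FR Λ) where
  obj M := ⟨zext FR Λ M, zext_additive FR Λ M⟩
  map {M N} φ := InducedCategory.Hom.mk (show zext FR Λ M ⟶ zext FR Λ N from
    { app := fun X => match X with
        | .of α => (toNatFF FR Λ φ).app (.of α)
        | .infty => 0
      naturality := by
        intro X Y f
        cases X <;> cases Y
        · exact (toNatFF FR Λ φ).naturality f
        · exact punit_hom_ext _ _
        · show (0 : _ ⟶ _) ≫ _ = (0 : _ ⟶ _) ≫ _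
          exact (zero_comp).trans (zero_comp).symm
        · exact punit_hom_ext _ _ })
  map_id M := modOFF_hom_ext FR Λ _ _ fun X => by
    cases X with
    | of α => rfl
    | infty => exact punit_hom_ext _ _
  map_comp f g := modOFF_hom_ext FR Λ _ _ fun X => by
    cases X with
    | of α => rfl
    | infty => exact punit_hom_ext _ _

/-- Forward map of the adjunction `jStar ⊣ R0`. -/
def r0Hom (X : Mod (OFF FR Λ)) (M : Mod (FF FR Λ)) (g : (jStar FR Λ).obj X ⟶ M) :
    X ⟶ (R0 FR Λ).obj M :=
  InducedCategory.Hom.mk (show X.obj ⟶ zext FR Λ M from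
    { app := fun Y => match Y with
        | .of α => (toNatFF FR Λ g).app (.of α)
        | .infty => 0
      naturality := by
        intro A B f
        cases A <;> cases B
        · exact (toNatFF FR Λ g).naturality f
        · exact punit_hom_ext _ _
        · rw [hom_infty_of_eq_zero FR Λ f]
          haveI := X.property
          rw [X.obj.map_zero, zero_comp]
          exact (zero_comp).symm
        · exact punit_hom_ext _ _ })

/-- Backward map of the adjunction `jStar ⊣ R0`. -/
def r0HomInv (X : Mod (OFF FR Λ)) (M : Mod (FF FR Λ)) (h : X ⟶ (R0 FR Λ).obj M) :
    (jStar FR Λ).obj X ⟶ M :=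
  InducedCategory.Hom.mk (show (jF FR Λ ⋙ X.obj) ⟶ M.obj from
    { app := fun A => match A with
        | .of α => (toNatOFF FR Λ h).app (.of α)
      naturality := by
        intro A B f
        cases A
        cases B
        exact (toNatOFF FR Λ h).naturality f })

lemma r0Hom_leftInv (X : Mod (OFF FR Λ)) (M : Mod (FF FR Λ)) (g : (jStar FR Λ).obj X ⟶ M) :
    r0HomInv FR Λ X M (r0Hom FR Λ X M g) = g :=
  modFF_hom_ext FR Λ _ _ fun A => by cases A; rfl

lemma r0Hom_rightInv (X : Mod (OFF FR Λ)) (M : Mod (FF FR Λ)) (h : X ⟶ (R0 FR Λ).obj M) :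
    r0Hom FR Λ X M (r0HomInv FR Λ X M h) = h :=
  modOFF_hom_ext FR Λ _ _ fun A => by
    cases A with
    | of α => rfl
    | infty => apply punit_hom_ext

/-- The adjunction `jStar ⊣ R0`. -/
def adjR : jStar FR Λ ⊣ R0 FR Λ :=
  Adjunction.mkOfHomEquiv
    { homEquiv := fun X M =>
        { toFun := r0Hom FR Λ X M
          invFun := r0HomInv FR Λ X M
          left_inv := r0Hom_leftInv FR Λ X M
          right_inv := r0Hom_rightInv FR Λ X M }
      homEquiv_naturality_left_symm := by
        intro X' X M f g
        exact modFF_hom_ext FR Λ _ _ fun A => by cases A; rfl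
      homEquiv_naturality_right := by
        intro X M M' g k
        refine modOFF_hom_ext FR Λ _ _ fun A => ?_
        cases A with
        | of α => rfl
        | infty => apply punit_hom_ext }

lemma jStar_map_adjR_unit_isIso (Y : Mod (OFF FR Λ)) :
    IsIso ((jStar FR Λ).map ((adjR FR Λ).unit.app Y)) := by
  apply isIso_modFF_of_components
  rintro ⟨α⟩
  show IsIso (𝟙 (Y.obj.obj (OFF.of α)))
  infer_instance

lemma adjR_counit_isIso : IsIso (adjR FR Λ).counit := by
  have : ∀ M, IsIso ((adjR FR Λ).counit.app M) := by
    intro M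
    apply isIso_modFF_of_components
    rintro ⟨α⟩
    show IsIso (𝟙 (M.obj.obj (FF.of α)))
    infer_instance
  exact NatIso.isIso_of_isIso_app _

lemma unit_isIso_of_adj_id {D : Type*} [Category D] {A : D ⥤ D} (adj : A ⊣ 𝟭 D) (X : D) :
    IsIso (adj.unit.app X) := by
  refine ⟨adj.counit.app X, ?_, ?_⟩
  · simpa using adj.right_triangle_components X
  · have h1 := adj.left_triangle_components X
    have h2 := adj.counit.naturality (adj.unit.app X)
    simp only [Functor.id_obj, Functor.comp_obj, Functor.comp_map, Functor.id_map] at h1 h2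
    rw [← h2]
    exact h1

lemma adjjb_unit_isIso (jbang : Mod (FF FR Λ) ⥤ Mod (OFF FR Λ)) (adjjb : jbang ⊣ jStar FR Λ)
    (M : Mod (FF FR Λ)) : IsIso (adjjb.unit.app M) := by
  have adjComp := adjjb.comp (adjR FR Λ)
  haveI := adjR_counit_isIso FR Λ
  have e : (R0 FR Λ ⋙ jStar FR Λ) ≅ 𝟭 _ := asIso (adjR FR Λ).counit
  have hu : ((adjjb.comp (adjR FR Λ)).ofNatIsoRight e).unit.app M =
      (adjjb.comp (adjR FR Λ)).unit.app M ≫ e.hom.app ((jbang ⋙ jStar FR Λ).obj M) := by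
    simp [Adjunction.ofNatIsoRight, Adjunction.equivHomsetRightOfNatIso,
      Adjunction.mkOfHomEquiv, Adjunction.homEquiv, Adjunction.comp_unit_app]
  have h1 : IsIso (((adjjb.comp (adjR FR Λ)).ofNatIsoRight e).unit.app M) :=
    unit_isIso_of_adj_id _ M
  rw [hu] at h1
  haveI : IsIso (e.hom.app ((jbang ⋙ jStar FR Λ).obj M)) := inferInstance
  haveI h2 : IsIso ((adjjb.comp (adjR FR Λ)).unit.app M) := by
    haveI := h1
    exact IsIso.of_isIso_comp_right _ (e.hom.app ((jbang ⋙ jStar FR Λ).obj M))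
  rw [Adjunction.comp_unit_app] at h2
  haveI := jStar_map_adjR_unit_isIso FR Λ (jbang.obj M)
  haveI := h2
  exact IsIso.of_isIso_comp_right (adjjb.unit.app M)
    ((jStar FR Λ).map ((adjR FR Λ).unit.app (jbang.obj M)))

/-- Fully faithful structure on `etaF`. -/
def etaFF : (etaF FR Λ).FullyFaithful where
  preimage f := ⟨f⟩
  map_preimage _ := rfl
  preimage_map _ := rfl

/-- The comparison isomorphism `𝟭 ⋙ (iotaF ⋙ jStar) ≅ jRes ⋙ etaF`. -/
def comm2C : 𝟭 (Preglid FR Λ) ⋙ (iotaF FR Λ ⋙ jStar FR Λ) ≅ jRes FR Λ ⋙ etaF FR Λ :=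
  NatIso.ofComponents (fun N => Iso.refl _) (by
    intro X Y f
    simp only [Functor.comp_obj, Functor.id_obj, Functor.comp_map, Functor.id_map,
      Iso.refl_hom, Category.comp_id, Category.id_comp]
    rfl)

/-- The canonical adjunction `j_L ⊣ j^*` built from `adjjb` and `adjκ`. -/
noncomputable def adjC (κ : Mod (OFF FR Λ) ⥤ Preglid FR Λ) (adjκ : κ ⊣ iotaF FR Λ)
    (jbang : Mod (FF FR Λ) ⥤ Mod (OFF FR Λ)) (adjjb : jbang ⊣ jStar FR Λ) :
    (etaF FR Λ ⋙ jbang ⋙ κ) ⊣ jRes FR Λ :=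
  (adjjb.comp adjκ).restrictFullyFaithful (etaFF FR Λ)
    (Functor.FullyFaithful.id (Preglid FR Λ))
    ((Functor.rightUnitor (etaF FR Λ ⋙ jbang ⋙ κ)).symm)
    (comm2C FR Λ)

lemma adjC_unit_isIso_iff (κ : Mod (OFF FR Λ) ⥤ Preglid FR Λ) (adjκ : κ ⊣ iotaF FR Λ)
    (jbang : Mod (FF FR Λ) ⥤ Mod (OFF FR Λ)) (adjjb : jbang ⊣ jStar FR Λ)
    (M : Prefrag FR Λ) :
    IsIso ((adjC FR Λ κ adjκ jbang adjjb).unit.app M) ↔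
      IsIso ((jStar FR Λ).map (adjκ.unit.app (jbang.obj ((etaF FR Λ).obj M)))) := by
  rw [isIso_prefrag_iff]
  have hh := Adjunction.map_restrictFullyFaithful_unit_app (adjjb.comp adjκ) (etaFF FR Λ)
    (Functor.FullyFaithful.id (Preglid FR Λ))
    ((Functor.rightUnitor (etaF FR Λ ⋙ jbang ⋙ κ)).symm) (comm2C FR Λ) M
  rw [show adjC FR Λ κ adjκ jbang adjjb = (adjjb.comp adjκ).restrictFullyFaithful (etaFF FR Λ)
      (Functor.FullyFaithful.id (Preglid FR Λ))
      ((Functor.rightUnitor (etaF FR Λ ⋙ jbang ⋙ κ)).symm) (comm2C FR Λ) from rfl, hh,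
    Adjunction.comp_unit_app]
  haveI hb : IsIso (adjjb.unit.app ((etaF FR Λ).obj M)) :=
    adjjb_unit_isIso FR Λ jbang adjjb _
  constructor
  · intro h
    haveI := h
    rw [← Category.assoc] at h
    haveI h1 : IsIso ((adjjb.unit.app ((etaF FR Λ).obj M) ≫
        (jStar FR Λ).map (adjκ.unit.app (jbang.obj ((etaF FR Λ).obj M)))) ≫
        (iotaF FR Λ ⋙ jStar FR Λ).map
          ((Functor.rightUnitor (etaF FR Λ ⋙ jbang ⋙ κ)).symm.hom.app M)) :=
      IsIso.of_isIso_comp_right _ ((comm2C FR Λ).hom.app ((etaF FR Λ ⋙ jbang ⋙ κ).obj M))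
    haveI h2 : IsIso (adjjb.unit.app ((etaF FR Λ).obj M) ≫
        (jStar FR Λ).map (adjκ.unit.app (jbang.obj ((etaF FR Λ).obj M)))) :=
      IsIso.of_isIso_comp_right _ ((iotaF FR Λ ⋙ jStar FR Λ).map
        ((Functor.rightUnitor (etaF FR Λ ⋙ jbang ⋙ κ)).symm.hom.app M))
    exact IsIso.of_isIso_comp_left (adjjb.unit.app ((etaF FR Λ).obj M)) _
  · intro h
    haveI := h
    infer_instance

/-- `jStar.map (adjκ.unit.app X)` is an isomorphism iff `X` is a preglider. -/
lemma jStar_unit_isIso_iff_isPreglider (κ : Mod (OFF FR Λ) ⥤ Preglid FR Λ)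
    (adjκ : κ ⊣ iotaF FR Λ) (X : Mod (OFF FR Λ)) :
    IsIso ((jStar FR Λ).map (adjκ.unit.app X)) ↔ IsPreglider FR Λ X := by
  constructor
  · intro h
    apply isPreglider_of_infty
    intro Y
    cases Y with
    | infty =>
      have : unitHom FR Λ .infty .infty (le_infty' FR Λ _) = 𝟙 (OFF.infty : OFF FR Λ) :=
        Subtype.ext rfl
      rw [this, X.obj.map_id]
      exact fun a b hab => hab
    | of α =>
      haveI hc : IsIso ((toNatFF FR Λ ((jStar FR Λ).map (adjκ.unit.app X))).app (FF.of α)) :=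
        app_isIso_of_isIso_modFF FR Λ _ _
      haveI hc' : IsIso ((toNatOFF FR Λ (adjκ.unit.app X)).app (OFF.of α)) := hc
      intro a b hab
      apply injective_of_isIso_addCommGrp ((toNatOFF FR Λ (adjκ.unit.app X)).app (OFF.of α))
      apply (κ.obj X).property (.of α) .infty (le_infty' FR Λ _)
      have hnat := (toNatOFF FR Λ (adjκ.unit.app X)).naturality
        (unitHom FR Λ (.of α) .infty (le_infty' FR Λ _))
      have h2 : ∀ c, (κ.obj X).obj.obj.map (unitHom FR Λ (.of α) .infty (le_infty' FR Λ _))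
          ((toNatOFF FR Λ (adjκ.unit.app X)).app (.of α) c) =
          (toNatOFF FR Λ (adjκ.unit.app X)).app .infty
            (X.obj.map (unitHom FR Λ (.of α) .infty (le_infty' FR Λ _)) c) := by
        intro c
        exact (congrArg (fun g => g c) hnat).symm
      rw [h2 a, h2 b, hab]
  · intro h
    haveI : (iotaF FR Λ).Full :=
      inferInstanceAs ((ObjectProperty.ι
        (fun M : Mod (OFF FR Λ) => IsPreglider FR Λ M)).Full)
    haveI : (iotaF FR Λ).Faithful :=
      inferInstanceAs ((ObjectProperty.ι
        (fun M : Mod (OFF FR Λ) => IsPreglider FR Λ M)).Faithful)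
    have htr := adjκ.right_triangle_components (⟨X, h⟩ : Preglid FR Λ)
    haveI : IsIso (adjκ.counit.app (⟨X, h⟩ : Preglid FR Λ)) := inferInstance
    haveI : IsIso ((iotaF FR Λ).map (adjκ.counit.app (⟨X, h⟩ : Preglid FR Λ))) :=
      inferInstance
    haveI : IsIso (adjκ.unit.app ((iotaF FR Λ).obj (⟨X, h⟩ : Preglid FR Λ)) ≫
        (iotaF FR Λ).map (adjκ.counit.app (⟨X, h⟩ : Preglid FR Λ))) := by
      rw [htr]; exact IsIso.id _
    haveI : IsIso (adjκ.unit.app ((iotaF FR Λ).obj (⟨X, h⟩ : Preglid FR Λ))) :=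
      IsIso.of_isIso_comp_right _ ((iotaF FR Λ).map (adjκ.counit.app (⟨X, h⟩ : Preglid FR Λ)))
    haveI : IsIso (adjκ.unit.app X) := this
    infer_instance

/-- For any preglider `N`, `j_!(j^* N)` is a preglider. -/
lemma isPreglider_jbang_jStar (jbang : Mod (FF FR Λ) ⥤ Mod (OFF FR Λ))
    (adjjb : jbang ⊣ jStar FR Λ) (N : Preglid FR Λ) :
    IsPreglider FR Λ (jbang.obj ((jStar FR Λ).obj ((iotaF FR Λ).obj N))) := by
  have htr := adjjb.right_triangle_components ((iotaF FR Λ).obj N)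
  haveI := adjjb_unit_isIso FR Λ jbang adjjb ((jStar FR Λ).obj ((iotaF FR Λ).obj N))
  haveI hsm : IsIso ((jStar FR Λ).map (adjjb.counit.app ((iotaF FR Λ).obj N))) := by
    haveI : IsIso (adjjb.unit.app ((jStar FR Λ).obj ((iotaF FR Λ).obj N)) ≫
        (jStar FR Λ).map (adjjb.counit.app ((iotaF FR Λ).obj N))) := by
      rw [htr]; exact IsIso.id _
    exact IsIso.of_isIso_comp_left (adjjb.unit.app ((jStar FR Λ).obj ((iotaF FR Λ).obj N))) _
  apply isPreglider_of_infty
  intro Y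
  cases Y with
  | infty =>
    have : unitHom FR Λ .infty .infty (le_infty' FR Λ _) = 𝟙 (OFF.infty : OFF FR Λ) :=
      Subtype.ext rfl
    rw [this, (jbang.obj ((jStar FR Λ).obj ((iotaF FR Λ).obj N))).obj.map_id]
    exact fun a b hab => hab
  | of α =>
    haveI hc : IsIso ((toNatFF FR Λ
        ((jStar FR Λ).map (adjjb.counit.app ((iotaF FR Λ).obj N)))).app (FF.of α)) :=
      app_isIso_of_isIso_modFF FR Λ _ _
    haveI hc' : IsIso ((toNatOFF FR Λ (adjjb.counit.app ((iotaF FR Λ).obj N))).app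
      (OFF.of α)) := hc
    intro a b hab
    apply injective_of_isIso_addCommGrp
      ((toNatOFF FR Λ (adjjb.counit.app ((iotaF FR Λ).obj N))).app (OFF.of α))
    apply N.property (.of α) .infty (le_infty' FR Λ _)
    have hnat := (toNatOFF FR Λ (adjjb.counit.app ((iotaF FR Λ).obj N))).naturality
      (unitHom FR Λ (.of α) .infty (le_infty' FR Λ _))
    have h2 : ∀ c, N.obj.obj.map (unitHom FR Λ (.of α) .infty (le_infty' FR Λ _))
        ((toNatOFF FR Λ (adjjb.counit.app ((iotaF FR Λ).obj N))).app (.of α) c) =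
        (toNatOFF FR Λ (adjjb.counit.app ((iotaF FR Λ).obj N))).app .infty
          ((jbang.obj ((jStar FR Λ).obj ((iotaF FR Λ).obj N))).obj.map
            (unitHom FR Λ (.of α) .infty (le_infty' FR Λ _)) c) := by
      intro c
      exact (congrArg (fun g => g c) hnat).symm
    rw [h2 a, h2 b, hab]

lemma essImage_phiF_iff (M : Prefrag FR Λ) :
    (phiF FR Λ).essImage M ↔ ∃ N : Preglid FR Λ, Nonempty ((jRes FR Λ).obj N ≅ M) := by
  constructor
  · rintro ⟨Y, ⟨i⟩⟩
    haveI : (QF FR Λ).IsLocalization (SigmaClass FR Λ) :=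
      inferInstanceAs (((SigmaClass FR Λ).Q).IsLocalization _)
    haveI := Localization.essSurj (QF FR Λ) (SigmaClass FR Λ)
    refine ⟨(QF FR Λ).objPreimage Y, ⟨?_⟩⟩
    exact (eqToIso (Functor.congr_obj (phiF_fac FR Λ) _).symm).trans
      (((phiF FR Λ).mapIso ((QF FR Λ).objObjPreimageIso Y)).trans i)
  · rintro ⟨N, ⟨i⟩⟩
    exact ⟨(QF FR Λ).obj N, ⟨(eqToIso (Functor.congr_obj (phiF_fac FR Λ) N)).trans i⟩⟩

end Auxiliary

section Statements

variable {Γ : Type u} [Group Γ] [PartialOrder Γ]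
  [CovariantClass Γ Γ (· * ·) (· ≤ ·)] [CovariantClass Γ Γ (Function.swap (· * ·)) (· ≤ ·)]
  {R : Type u} [Ring R]

/-- For an object `M` of `Prefrag FR` the following are equivalent:
(1) `M` lies in the essential image of `φ : Glid FR ⥤ Prefrag FR`;
(2) the counit of the adjunction `ψ ⊣ φ` at `M` is an isomorphism;
(3) the counit of the adjunction `j_L ⊣ j^*` at `M` is an isomorphism;
(4) `j_!(η(M))` lies in `Preglid FR`.
Here `κ ⊣ ι` and `j_! ⊣ j^*` are arbitrary choices of the adjunctions, `j_L = κ∘j_!∘η`,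
`adjL : j_L ⊣ jRes` and `adjPsi : ψ ⊣ φ` (with `ψ = Q∘j_L`) arbitrary witnessing
adjunctions. -/
theorem statement_8 (FR : RingFiltration Γ R) (Λ : Set Γ)
    (κ : Mod (OFF FR Λ) ⥤ Preglid FR Λ) (adjκ : κ ⊣ iotaF FR Λ)
    (jbang : Mod (FF FR Λ) ⥤ Mod (OFF FR Λ)) (adjjb : jbang ⊣ jStar FR Λ)
    (adjL : (etaF FR Λ ⋙ jbang ⋙ κ) ⊣ jRes FR Λ)
    (adjPsi : ((etaF FR Λ ⋙ jbang ⋙ κ) ⋙ QF FR Λ) ⊣ phiF FR Λ)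
    (M : Prefrag FR Λ) :
    -- (2): the canonical comparison morphism between `M` and `φ(ψ(M))` (the unit of
    -- `ψ ⊣ φ` in Mathlib's conventions; the paper calls it the counit) is invertible
    ((phiF FR Λ).essImage M ↔ IsIso (adjPsi.unit.app M)) ∧
    -- (3): the canonical comparison morphism between `M` and `j^*(j_L(M))` is invertible
    ((phiF FR Λ).essImage M ↔ IsIso (adjL.unit.app M)) ∧
    ((phiF FR Λ).essImage M ↔ IsPreglider FR Λ (jbang.obj ((etaF FR Λ).obj M))) := by
  have keyPre : (phiF FR Λ).essImage M ↔
      IsPreglider FR Λ (jbang.obj ((etaF FR Λ).obj M)) := by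
    constructor
    · intro h
      obtain ⟨N, ⟨i⟩⟩ := (essImage_phiF_iff FR Λ M).mp h
      exact isPreglider_of_iso FR Λ (jbang.mapIso ((etaF FR Λ).mapIso i))
        (isPreglider_jbang_jStar FR Λ jbang adjjb N)
    · intro h
      haveI : IsIso ((adjC FR Λ κ adjκ jbang adjjb).unit.app M) :=
        (adjC_unit_isIso_iff FR Λ κ adjκ jbang adjjb M).mpr
          ((jStar_unit_isIso_iff_isPreglider FR Λ κ adjκ _).mpr h)
      exact (essImage_phiF_iff FR Λ M).mpr
        ⟨(etaF FR Λ ⋙ jbang ⋙ κ).obj M,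
          ⟨(asIso ((adjC FR Λ κ adjκ jbang adjjb).unit.app M)).symm⟩⟩
  have keyL : (phiF FR Λ).essImage M ↔ IsIso (adjL.unit.app M) := by
    have hcomp := Adjunction.unit_leftAdjointUniq_hom_app
      (adjC FR Λ κ adjκ jbang adjjb) adjL M
    constructor
    · intro h
      haveI : IsIso ((adjC FR Λ κ adjκ jbang adjjb).unit.app M) :=
        (adjC_unit_isIso_iff FR Λ κ adjκ jbang adjjb M).mpr
          ((jStar_unit_isIso_iff_isPreglider FR Λ κ adjκ _).mpr (keyPre.mp h))
      rw [← hcomp]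
      infer_instance
    · intro h
      apply (essImage_phiF_iff FR Λ M).mpr
      exact ⟨(etaF FR Λ ⋙ jbang ⋙ κ).obj M, ⟨(asIso (adjL.unit.app M)).symm⟩⟩
  have keyPsi : IsIso (adjPsi.unit.app M) ↔ IsIso (adjL.unit.app M) := by
    haveI : (QF FR Λ).IsLocalization (SigmaClass FR Λ) :=
      inferInstanceAs (((SigmaClass FR Λ).Q).IsLocalization _)
    haveI : (𝟭 (Prefrag FR Λ)).IsLocalization
        (MorphismProperty.isomorphisms (Prefrag FR Λ)) :=
      Functor.IsLocalization.for_id _ (le_refl _)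
    letI sq1 : CatCommSq (etaF FR Λ ⋙ jbang ⋙ κ) (𝟭 (Prefrag FR Λ)) (QF FR Λ)
        ((etaF FR Λ ⋙ jbang ⋙ κ) ⋙ QF FR Λ) :=
      ⟨(Functor.leftUnitor ((etaF FR Λ ⋙ jbang ⋙ κ) ⋙ QF FR Λ)).symm⟩
    letI sq2 : CatCommSq (jRes FR Λ) (QF FR Λ) (𝟭 (Prefrag FR Λ)) (phiF FR Λ) :=
      ⟨eqToIso (by rw [Functor.comp_id, phiF_fac])⟩
    let adj2 : ((etaF FR Λ ⋙ jbang ⋙ κ) ⋙ QF FR Λ) ⊣ phiF FR Λ :=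
      adjL.localization (𝟭 (Prefrag FR Λ)) (MorphismProperty.isomorphisms (Prefrag FR Λ))
        (QF FR Λ) (SigmaClass FR Λ) ((etaF FR Λ ⋙ jbang ⋙ κ) ⋙ QF FR Λ) (phiF FR Λ)
    have h2u : adj2.unit.app M = (𝟭 (Prefrag FR Λ)).map (adjL.unit.app M) ≫
        (CatCommSq.iso (jRes FR Λ) (QF FR Λ) (𝟭 (Prefrag FR Λ)) (phiF FR Λ)).hom.app
          ((etaF FR Λ ⋙ jbang ⋙ κ).obj M) ≫
        (phiF FR Λ).map ((CatCommSq.iso (etaF FR Λ ⋙ jbang ⋙ κ) (𝟭 (Prefrag FR Λ))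
          (QF FR Λ) ((etaF FR Λ ⋙ jbang ⋙ κ) ⋙ QF FR Λ)).hom.app M) :=
      Adjunction.localization_unit_app adjL (𝟭 (Prefrag FR Λ))
        (MorphismProperty.isomorphisms (Prefrag FR Λ)) (QF FR Λ) (SigmaClass FR Λ)
        ((etaF FR Λ ⋙ jbang ⋙ κ) ⋙ QF FR Λ) (phiF FR Λ) M
    have hid : (𝟭 (Prefrag FR Λ)).map (adjL.unit.app M) = adjL.unit.app M := rfl
    rw [hid] at h2u
    have hiff2 : IsIso (adj2.unit.app M) ↔ IsIso (adjL.unit.app M) := by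
      rw [h2u]
      constructor
      · intro h
        haveI := h
        exact IsIso.of_isIso_comp_right (adjL.unit.app M)
          ((CatCommSq.iso (jRes FR Λ) (QF FR Λ) (𝟭 (Prefrag FR Λ)) (phiF FR Λ)).hom.app
            ((etaF FR Λ ⋙ jbang ⋙ κ).obj M) ≫
          (phiF FR Λ).map ((CatCommSq.iso (etaF FR Λ ⋙ jbang ⋙ κ) (𝟭 (Prefrag FR Λ))
            (QF FR Λ) ((etaF FR Λ ⋙ jbang ⋙ κ) ⋙ QF FR Λ)).hom.app M))
      · intro h
        haveI := h
        infer_instance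
    have hcomp := Adjunction.unit_leftAdjointUniq_hom_app adj2 adjPsi M
    constructor
    · intro h
      haveI := h
      rw [← hcomp] at h
      haveI := h
      exact hiff2.mp (IsIso.of_isIso_comp_right _
        ((phiF FR Λ).map ((Adjunction.leftAdjointUniq adj2 adjPsi).hom.app M)))
    · intro h
      haveI : IsIso (adj2.unit.app M) := hiff2.mpr h
      rw [← hcomp]
      infer_instance
  exact ⟨keyL.trans keyPsi.symm, keyL, keyPre⟩

end Statements

end GliderPaper
end
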